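/- Fix a real number x₀ > −1 and for x > x₀ define e₁(x) := ((1+x)/(x−x₀))·log((1+x)/(1+x₀)) − log( ((1+x)/(x−x₀))·log((1+x)/(1+x₀)) ) − 1. Then e₁ is strictly increasing on the interval (x₀, ∞); that is, for all x, y with x₀ < x < y one has e₁(x) < e₁(y). -/

import Mathlib

open Real Set

/-- The hyperplane-approximation error `e₁` is strictly increasing on `(x₀, ∞)`. -/
theorem approx_error_strictMono (x₀ : ℝ) (hx₀ : -1 < x₀) :
    StrictMonoOn (fun x : ℝ =>
        ((1 + x) / (x - x₀)) * Real.log ((1 + x) / (1 + x₀))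
          - Real.log (((1 + x) / (x - x₀)) * Real.log ((1 + x) / (1 + x₀))) - 1)
      (Set.Ioi x₀) := by
  have h0 : (0:ℝ) < 1 + x₀ := by linarith
  set G : ℝ → ℝ := fun x => ((1 + x) * (Real.log (1 + x) - Real.log (1 + x₀))) / (x - x₀)
    with hGdef
  have main : ∀ x ∈ Ioi x₀, ∃ d : ℝ, 0 < d ∧
      HasDerivAt (fun y => G y - Real.log (G y) - 1) d x := by
    intro x hx
    have hxx : x₀ < x := hx
    have hx1 : (0:ℝ) < 1 + x := by linarith
    have hD : (0:ℝ) < x - x₀ := by linarith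
    set L := Real.log (1 + x) - Real.log (1 + x₀) with hLdef
    have hL : 0 < L := by
      have := Real.log_lt_log h0 (by linarith : 1 + x₀ < 1 + x)
      simp only [hLdef]; linarith
    -- G x > 1
    have hGx : 1 < G x := by
      have h1 : Real.log ((1+x₀)/(1+x)) < (1+x₀)/(1+x) - 1 := by
        apply Real.log_lt_sub_one_of_pos (by positivity)
        intro h
        field_simp at h
        linarith
      rw [Real.log_div (by linarith) (by linarith)] at h1
      have hq : (1+x₀)/(1+x) - 1 = -((x - x₀)/(1+x)) := by field_simp; ring
      rw [hq] at h1
      have h2 : (x - x₀)/(1+x) < L := by simp only [hLdef]; linarith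
      have h3 : x - x₀ < (1 + x) * L := by
        rw [div_lt_iff₀ hx1] at h2
        nlinarith
      simp only [hGdef]
      rw [one_lt_div hD]
      exact h3
    have hGne : G x ≠ 0 := by linarith
    -- derivative of G
    have h1 : HasDerivAt (fun y : ℝ => 1 + y) 1 x := by
      simpa using (hasDerivAt_id x).const_add 1
    have h2 : HasDerivAt (fun y : ℝ => Real.log (1 + y) - Real.log (1 + x₀)) (1/(1+x)) x := by
      have h3 := (Real.hasDerivAt_log (ne_of_gt hx1)).comp x h1
      simpa [one_div] using h3.sub_const (Real.log (1 + x₀))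
    have hN : HasDerivAt (fun y : ℝ => (1 + y) * (Real.log (1 + y) - Real.log (1 + x₀)))
        (1 * L + (1 + x) * (1/(1+x))) x := h1.mul h2
    have hDen : HasDerivAt (fun y : ℝ => y - x₀) 1 x := by
      simpa using (hasDerivAt_id x).sub_const x₀
    set d1 : ℝ := ((1 * L + (1 + x) * (1/(1+x))) * (x - x₀) -
        ((1 + x) * L) * 1) / (x - x₀)^2 with hd1def
    have hG' : HasDerivAt G d1 x := hN.div hDen (ne_of_gt hD)
    have hd1pos : 0 < d1 := by
      have hc : L < (x - x₀)/(1 + x₀) := by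
        have h1 : Real.log ((1+x)/(1+x₀)) < (1+x)/(1+x₀) - 1 := by
          apply Real.log_lt_sub_one_of_pos (by positivity)
          intro h
          field_simp at h
          linarith
        rw [Real.log_div (by linarith) (by linarith)] at h1
        have hq : (1+x)/(1+x₀) - 1 = (x - x₀)/(1+x₀) := by field_simp; ring
        rw [hq] at h1
        simpa [hLdef] using h1
      have hc2 : (1 + x₀) * L < x - x₀ := by
        rw [lt_div_iff₀ h0] at hc
        nlinarith
      have hnum : (1 * L + (1 + x) * (1/(1+x))) * (x - x₀) - ((1 + x) * L) * 1
          = (x - x₀) - (1 + x₀) * L := by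
        field_simp
        ring
      simp only [hd1def, hnum]
      apply div_pos (by linarith) (by positivity)
    have hlogG : HasDerivAt (fun y => Real.log (G y)) ((G x)⁻¹ * d1) x :=
      (Real.hasDerivAt_log hGne).comp x hG'
    refine ⟨d1 - (G x)⁻¹ * d1, ?_, ?_⟩
    · have hinv : (G x)⁻¹ < 1 := by
        rw [inv_lt_one_iff₀]; right; exact hGx
      nlinarith
    · exact (hG'.sub hlogG).sub_const 1
  have key : StrictMonoOn (fun y => G y - Real.log (G y) - 1) (Ioi x₀) := by
    apply strictMonoOn_of_deriv_pos (convex_Ioi x₀)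
    · intro x hx
      obtain ⟨d, _, hd⟩ := main x hx
      exact hd.continuousAt.continuousWithinAt
    · intro x hx
      rw [interior_Ioi] at hx
      obtain ⟨d, hdpos, hd⟩ := main x hx
      rw [hd.deriv]
      exact hdpos
  have eOn : ∀ x ∈ Ioi x₀,
      ((1 + x) / (x - x₀)) * Real.log ((1 + x) / (1 + x₀))
          - Real.log (((1 + x) / (x - x₀)) * Real.log ((1 + x) / (1 + x₀))) - 1
        = G x - Real.log (G x) - 1 := by
    intro x hx
    have hx1 : (0:ℝ) < 1 + x := by have : x₀ < x := hx; linarith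
    rw [Real.log_div (ne_of_gt hx1) (ne_of_gt h0)]
    simp only [hGdef]
    rw [div_mul_eq_mul_div]
  intro a ha b hb hab
  simpa only [eOn a ha, eOn b hb] using key ha hb hab
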